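/- Let 2 ≤ i ≤ n and suppose the set {j ∈ [1,i) : x_j ≻ x_i} is nonempty, with maximum p. Then the subword x[p..i−1] is an inverse Lyndon word. -/

import Mathlib

namespace LynArr

variable {α : Type*} [LinearOrder α]

/-- Strict lexicographic order on words:
`u ≺ v` iff `u` is a proper prefix of `v`, or at the first differing position `u` is smaller. -/
def Llt (u v : List α) : Prop := List.Lex (· < ·) u v

/-- The suffix `x_i = x[i..n]` (1-based indexing). -/
def suff (x : List α) (i : ℕ) : List α := x.drop (i - 1)

/-- The subword `x[i..j]` (1-based, inclusive). -/
def sub (x : List α) (i j : ℕ) : List α := (x.drop (i - 1)).take (j - i + 1)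

/-- `w` is a Lyndon word: nonempty and lexicographically smaller than
all of its nonempty proper suffixes. -/
def IsLyndon (w : List α) : Prop :=
  w ≠ [] ∧ ∀ k, 0 < k → k < w.length → Llt w (w.drop k)

/-- `w` is an inverse Lyndon word: nonempty and lexicographically greater than
all of its nonempty proper suffixes. -/
def IsInvLyndon (w : List α) : Prop :=
  w ≠ [] ∧ ∀ k, 0 < k → k < w.length → Llt (w.drop k) w

/-- `lce x i j`: the length of the longest common prefix of the suffixes `x_i` and `x_j`. -/
def lce (x : List α) (i j : ℕ) : ℕ :=
  (((suff x i).zip (suff x j)).takeWhile fun p => p.1 == p.2).length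

lemma lex_append_right {u v s : List α} (hlen : u.length < v.length)
    (h : List.Lex (· < ·) (u ++ s) (v ++ s)) : List.Lex (· < ·) u v := by
  induction u generalizing v with
  | nil =>
    cases v with
    | nil => simp at hlen
    | cons b v' => exact List.Lex.nil
  | cons a u' ih =>
    cases v with
    | nil => simp at hlen
    | cons b v' =>
      simp only [List.cons_append] at h
      cases h with
      | rel hab => exact List.Lex.rel hab
      | cons h' => exact List.Lex.cons (ih (by simpa using Nat.lt_of_succ_lt_succ hlen) h')

theorem sub_prevGreater_isInvLyndon {α : Type*} [LinearOrder α] (x : List α) (n i p : ℕ)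
    (hn : n = x.length) (hi2 : 2 ≤ i) (hin : i ≤ n)
    (hp : IsGreatest {j | 1 ≤ j ∧ j < i ∧ Llt (suff x i) (suff x j)} p) :
    IsInvLyndon (sub x p (i - 1)) := by
  obtain ⟨⟨hp1, hpi, hplex⟩, hub⟩ := hp
  have hilen : i ≤ x.length := hn ▸ hin
  have hsub : sub x p (i - 1) = (x.drop (p - 1)).take (i - p) := by
    unfold sub
    congr 1
    omega
  have hlen : (sub x p (i - 1)).length = i - p := by
    rw [hsub, List.length_take, List.length_drop]
    omega
  constructor
  · intro hne
    rw [← List.length_eq_zero_iff] at hne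
    omega
  · intro k hk0 hk
    rw [hlen] at hk
    have hdec : ∀ m : ℕ, 1 ≤ m → m < i →
        suff x m = (x.drop (m - 1)).take (i - m) ++ suff x i := by
      intro m hm1 hmi
      unfold suff
      conv_lhs => rw [← List.take_append_drop (i - m) (x.drop (m - 1))]
      rw [List.drop_drop]
      congr 2
      omega
    have hq1 : 1 ≤ p + k := by omega
    have hqi : p + k < i := by omega
    have hqnot : ¬ Llt (suff x i) (suff x (p + k)) := by
      intro hc
      have := hub ⟨hq1, hqi, hc⟩
      omega
    have hqle : Llt (suff x (p + k)) (suff x p) := by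
      rcases trichotomous_of (List.Lex (· < ·)) (suff x (p + k)) (suff x i) with h | h | h
      · exact List.lex_trans (fun h₁ h₂ => lt_trans h₁ h₂) h hplex
      · rw [h]; exact hplex
      · exact absurd h hqnot
    rw [hdec p hp1 hpi, hdec (p + k) hq1 hqi] at hqle
    have hdk : (sub x p (i - 1)).drop k = (x.drop (p + k - 1)).take (i - (p + k)) := by
      rw [hsub, List.drop_take, List.drop_drop,
        show i - p - k = i - (p + k) from by omega,
        show p - 1 + k = p + k - 1 from by omega]
    rw [hdk, hsub]
    apply lex_append_right _ hqle
    rw [List.length_take, List.length_take, List.length_drop, List.length_drop]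
    omega

end LynArr
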